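/- Let K ≥ 2, let F ∈ 𝓕_K, and let Q ∈ 𝓠_K^in be such that there exist a row index k₀ and a real number δ with 0 < δ < 1/2 and Q_{k₀ i} ≥ δ for all i ∈ {1,…,N}. Then there exist F² ∈ 𝓕_K with F² ∉ 𝓕_K^an and Q² ∈ 𝓠_K^in such that FQ = F²Q², (F,Q) is not equivalent to (F²,Q²), and moreover the set of indices k such that some row of F² equals δ_k·e_kᵀ for some δ_k > 0 equals the corresponding set of indices for F with k₀ removed. -/

import Mathlib

open Matrix BigOperators

/-- `F ∈ 𝓕_K`: real `M × K` matrix with entries in `[0,1]`. -/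
def memF {M K : ℕ} (F : Matrix (Fin M) (Fin K) ℝ) : Prop :=
  ∀ s k, 0 ≤ F s k ∧ F s k ≤ 1

/-- `Q ∈ 𝓠_K`: real `K × N` matrix with nonnegative entries whose columns sum to 1. -/
def memQ {K N : ℕ} (Q : Matrix (Fin K) (Fin N) ℝ) : Prop :=
  (∀ k i, 0 ≤ Q k i) ∧ ∀ i, ∑ k, Q k i = 1

/-- The standard basis vector `e_k` occurs as a column of `Q`. -/
def isColE {K N : ℕ} (Q : Matrix (Fin K) (Fin N) ℝ) (k : Fin K) : Prop :=
  ∃ i, ∀ l, Q l i = if l = k then (1 : ℝ) else 0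

/-- `Q ∈ 𝓠_K^an`: anchor condition on `Q`. -/
def memQan {K N : ℕ} (Q : Matrix (Fin K) (Fin N) ℝ) : Prop :=
  memQ Q ∧ ∀ k, isColE Q k

/-- The `K-1` column differences `F_{⋆1}−F_{⋆K}, …, F_{⋆(K−1)}−F_{⋆K}` are
linearly independent (stated for every proof of `0 < K`). -/
def colDiffIndep {M K : ℕ} (F : Matrix (Fin M) (Fin K) ℝ) : Prop :=
  ∀ hK : 0 < K, LinearIndependent ℝ (fun j : Fin (K - 1) =>
    (fun s => F s (Fin.castLE (Nat.sub_le K 1) j) - F s ⟨K - 1, Nat.sub_lt hK Nat.one_pos⟩ :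
      Fin M → ℝ))

/-- `F ∈ 𝓕_K^in`. -/
def memFin {M K : ℕ} (F : Matrix (Fin M) (Fin K) ℝ) : Prop :=
  memF F ∧ colDiffIndep F

/-- `F ∈ 𝓕_K^an`: anchor condition on `F`. -/
def memFan {M K : ℕ} (F : Matrix (Fin M) (Fin K) ℝ) : Prop :=
  memF F ∧ ∀ k, ∃ s, 0 < F s k ∧ ∀ l, l ≠ k → F s l = 0

/-- `Q ∈ 𝓠_K^in`: the rows of `Q` are linearly independent. -/
def memQin {K N : ℕ} (Q : Matrix (Fin K) (Fin N) ℝ) : Prop :=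
  memQ Q ∧ LinearIndependent ℝ (fun k : Fin K => Q k)

/-- `F ∈ 𝓕_K^d`: the columns of `F` are mutually distinct. -/
def memFd {M K : ℕ} (F : Matrix (Fin M) (Fin K) ℝ) : Prop :=
  memF F ∧ ∀ k l : Fin K, (∀ s, F s k = F s l) → k = l

/-- `Q ∈ 𝓠_K^ua`: every column of `Q` is a standard basis vector, and every
standard basis vector occurs as a column. -/
def memQua {K N : ℕ} (Q : Matrix (Fin K) (Fin N) ℝ) : Prop :=
  memQ Q ∧ (∀ i, ∃ k, ∀ l, Q l i = if l = k then (1 : ℝ) else 0) ∧ ∀ k, isColE Q k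

/-- `(F¹,Q¹) ∼ (F²,Q²)`: there is a bijection (permutation) `π` with
`F²_{⋆k} = F¹_{⋆π(k)}` and `Q²_{k⋆} = Q¹_{π(k)⋆}` for every `k`. -/
def MEquiv {M N K₁ K₂ : ℕ} (F1 : Matrix (Fin M) (Fin K₁) ℝ) (Q1 : Matrix (Fin K₁) (Fin N) ℝ)
    (F2 : Matrix (Fin M) (Fin K₂) ℝ) (Q2 : Matrix (Fin K₂) (Fin N) ℝ) : Prop :=
  ∃ π : Fin K₂ → Fin K₁, Function.Bijective π ∧
    (∀ k s, F2 s k = F1 s (π k)) ∧ (∀ k i, Q2 k i = Q1 (π k) i)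

/-- `co(F)`: convex hull of the columns of `F` in `ℝ^M`. -/
def coCols {M K : ℕ} (F : Matrix (Fin M) (Fin K) ℝ) : Set (Fin M → ℝ) :=
  convexHull ℝ {v | ∃ k, v = fun s => F s k}

/-- `cone(Q)`: all nonnegative linear combinations of the rows of `Q` in `ℝ^N`. -/
def coneRows {K N : ℕ} (Q : Matrix (Fin K) (Fin N) ℝ) : Set (Fin N → ℝ) :=
  {x | ∃ c : Fin K → ℝ, (∀ k, 0 ≤ c k) ∧ x = ∑ k, c k • Q k}

/-- A model is identifiable if equality of the products implies equivalence. -/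
def Identifiable {M N : ℕ}
    (𝓜 : ∀ K : ℕ, Set (Matrix (Fin M) (Fin K) ℝ × Matrix (Fin K) (Fin N) ℝ)) : Prop :=
  ∀ (K₁ K₂ : ℕ) (F1 : Matrix (Fin M) (Fin K₁) ℝ) (Q1 : Matrix (Fin K₁) (Fin N) ℝ)
    (F2 : Matrix (Fin M) (Fin K₂) ℝ) (Q2 : Matrix (Fin K₂) (Fin N) ℝ),
    (F1, Q1) ∈ 𝓜 K₁ → (F2, Q2) ∈ 𝓜 K₂ → F1 * Q1 = F2 * Q2 → MEquiv F1 Q1 F2 Q2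

/-- The set of indices `k` such that some row of `F` equals `δ_k · e_kᵀ` with `δ_k > 0`. -/
def anchorRows {M K : ℕ} (F : Matrix (Fin M) (Fin K) ℝ) : Set (Fin K) :=
  {k | ∃ (s : Fin M) (d : ℝ), 0 < d ∧ ∀ l, F s l = if l = k then d else 0}

/-- if `F ∈ 𝓕_K` and `Q ∈ 𝓠_K^in` has a row `k₀` with `Q_{k₀ i} ≥ δ` for all
`i` (`0 < δ < 1/2`), there are `F² ∈ 𝓕_K ∖ 𝓕_K^an` and `Q² ∈ 𝓠_K^in` with `FQ = F²Q²`,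
`(F,Q) ≁ (F²,Q²)`, and the anchor rows of `F²` are those of `F` minus `k₀`. -/
theorem stmt5 {M N K : ℕ} (hM : 1 ≤ M) (hN : 1 ≤ N) (hK : 2 ≤ K)
    (F : Matrix (Fin M) (Fin K) ℝ) (hF : memF F)
    (Q : Matrix (Fin K) (Fin N) ℝ) (hQ : memQin Q)
    (k₀ : Fin K) (δ : ℝ) (hδ0 : 0 < δ) (hδh : δ < 1 / 2)
    (hQk₀ : ∀ i, δ ≤ Q k₀ i) :
    ∃ (F2 : Matrix (Fin M) (Fin K) ℝ) (Q2 : Matrix (Fin K) (Fin N) ℝ),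
      memF F2 ∧ ¬ memFan F2 ∧ memQin Q2 ∧ F * Q = F2 * Q2 ∧
      ¬ MEquiv F Q F2 Q2 ∧ anchorRows F2 = anchorRows F \ {k₀} := by
  classical
  obtain ⟨⟨hQpos, hQsum⟩, hQind⟩ := hQ
  have hKnt : Nontrivial (Fin K) := Fin.nontrivial_iff_two_le.mpr hK
  obtain ⟨k₁, hk₁⟩ := exists_ne k₀
  have hk₀₁ : k₀ ≠ k₁ := fun h => hk₁ h.symm
  have h1δ : (0:ℝ) < 1 + δ := by linarith
  have hQle1 : ∀ k i, Q k i ≤ 1 := by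
    intro k i
    calc Q k i ≤ ∑ l, Q l i :=
          Finset.single_le_sum (fun l _ => hQpos l i) (Finset.mem_univ k)
      _ = 1 := hQsum i
  set F2 : Matrix (Fin M) (Fin K) ℝ :=
    fun s k => if k = k₁ then (F s k₁ + δ * F s k₀) / (1 + δ) else F s k with hF2def
  set Q2 : Matrix (Fin K) (Fin N) ℝ :=
    fun k i => if k = k₀ then Q k₀ i - δ * Q k₁ i
               else if k = k₁ then (1 + δ) * Q k₁ i else Q k i with hQ2def
  have eF1 : ∀ s, F2 s k₁ = (F s k₁ + δ * F s k₀) / (1 + δ) := by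
    intro s; simp only [hF2def, if_pos rfl]
  have eFo : ∀ s k, k ≠ k₁ → F2 s k = F s k := by
    intro s k h; simp only [hF2def, if_neg h]
  have eQ0 : ∀ i, Q2 k₀ i = Q k₀ i - δ * Q k₁ i := by
    intro i; simp only [hQ2def, if_pos rfl]
  have eQ1 : ∀ i, Q2 k₁ i = (1 + δ) * Q k₁ i := by
    intro i; simp [hQ2def, hk₁]
  have eQo : ∀ k, k ≠ k₀ → k ≠ k₁ → ∀ i, Q2 k i = Q k i := by
    intro k h h' i; simp only [hQ2def, if_neg h, if_neg h']
  have hFnum : ∀ s, F2 s k₁ = 0 → F s k₁ = 0 ∧ F s k₀ = 0 := by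
    intro s h
    rw [eF1 s] at h
    have hnum : F s k₁ + δ * F s k₀ = 0 :=
      (div_eq_zero_iff.mp h).resolve_right h1δ.ne'
    have h1 := (hF s k₁).1
    have h2 := (hF s k₀).1
    constructor <;> nlinarith
  refine ⟨F2, Q2, ?_, ?_, ?_, ?_, ?_, ?_⟩
  · -- memF F2
    intro s k
    by_cases h : k = k₁
    · rw [h, eF1 s]
      have h1 := (hF s k₁).1; have h2 := (hF s k₀).1
      have h3 := (hF s k₁).2; have h4 := (hF s k₀).2
      constructor
      · apply div_nonneg _ h1δ.le; nlinarith
      · rw [div_le_one h1δ]; nlinarith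
    · rw [eFo s k h]; exact hF s k
  · -- ¬ memFan F2
    rintro ⟨_, hanch⟩
    obtain ⟨s, hs0, hs⟩ := hanch k₀
    obtain ⟨-, h2⟩ := hFnum s (hs k₁ hk₁)
    rw [eFo s k₀ hk₀₁, h2] at hs0
    exact lt_irrefl _ hs0
  · -- memQin Q2
    refine ⟨⟨?_, ?_⟩, ?_⟩
    · intro k i
      by_cases h : k = k₀
      · rw [h, eQ0 i]
        have h1 : δ * Q k₁ i ≤ δ * 1 := mul_le_mul_of_nonneg_left (hQle1 k₁ i) hδ0.le
        have := hQk₀ i; linarith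
      · by_cases h' : k = k₁
        · rw [h', eQ1 i]; exact mul_nonneg h1δ.le (hQpos k₁ i)
        · rw [eQo k h h' i]; exact hQpos k i
    · intro i
      have hsplit : ∑ k, (Q2 k i - Q k i) = (Q2 k₀ i - Q k₀ i) + (Q2 k₁ i - Q k₁ i) := by
        refine Finset.sum_eq_add k₀ k₁ hk₀₁ ?_ (by simp) (by simp)
        intro c _ hc
        rw [eQo c hc.1 hc.2 i, sub_self]
      have hz : ∑ k, (Q2 k i - Q k i) = 0 := by
        rw [hsplit, eQ0 i, eQ1 i]; ring
      rw [Finset.sum_sub_distrib] at hz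
      have := hQsum i
      linarith
    · rw [Fintype.linearIndependent_iff]
      intro g hg
      set g' : Fin K → ℝ := fun k =>
        if k = k₀ then g k₀ else if k = k₁ then (1 + δ) * g k₁ - δ * g k₀ else g k with hg'def
      have eg0 : g' k₀ = g k₀ := by simp only [hg'def, if_pos rfl]
      have eg1 : g' k₁ = (1 + δ) * g k₁ - δ * g k₀ := by
        simp [hg'def, hk₁]
      have ego : ∀ k, k ≠ k₀ → k ≠ k₁ → g' k = g k := by
        intro k h h'; simp only [hg'def, if_neg h, if_neg h']
      have hg'z : ∀ k, g' k = 0 := by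
        apply Fintype.linearIndependent_iff.mp hQind
        funext i
        have hgi : ∑ k, g k * Q2 k i = 0 := by
          have := congrFun hg i
          simpa [Finset.sum_apply] using this
        have hsplit : ∑ k, (g' k * Q k i - g k * Q2 k i)
            = (g' k₀ * Q k₀ i - g k₀ * Q2 k₀ i) + (g' k₁ * Q k₁ i - g k₁ * Q2 k₁ i) := by
          refine Finset.sum_eq_add k₀ k₁ hk₀₁ ?_ (by simp) (by simp)
          intro c _ hc
          rw [eQo c hc.1 hc.2 i, ego c hc.1 hc.2, sub_self]
        have hz : ∑ k, (g' k * Q k i - g k * Q2 k i) = 0 := by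
          rw [hsplit, eQ0 i, eQ1 i, eg0, eg1]; ring
        rw [Finset.sum_sub_distrib, hgi, sub_zero] at hz
        simpa [Finset.sum_apply] using hz
      intro k
      have h0 : g k₀ = 0 := by rw [← eg0]; exact hg'z k₀
      have h1 : g k₁ = 0 := by
        have := hg'z k₁
        rw [eg1, h0] at this
        have h2 : (1 + δ) * g k₁ = 0 := by linarith
        exact (mul_eq_zero.mp h2).resolve_left h1δ.ne'
      by_cases hk : k = k₀
      · rw [hk]; exact h0
      · by_cases hk' : k = k₁
        · rw [hk']; exact h1
        · rw [← ego k hk hk']; exact hg'z k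
  · -- F * Q = F2 * Q2
    ext s i
    rw [Matrix.mul_apply, Matrix.mul_apply]
    have hsplit : ∑ k, (F2 s k * Q2 k i - F s k * Q k i)
        = (F2 s k₀ * Q2 k₀ i - F s k₀ * Q k₀ i) + (F2 s k₁ * Q2 k₁ i - F s k₁ * Q k₁ i) := by
      refine Finset.sum_eq_add k₀ k₁ hk₀₁ ?_ (by simp) (by simp)
      intro c _ hc
      rw [eQo c hc.1 hc.2 i, eFo s c hc.2, sub_self]
    have hz : ∑ k, (F2 s k * Q2 k i - F s k * Q k i) = 0 := by
      rw [hsplit, eQ0 i, eQ1 i, eF1 s, eFo s k₀ hk₀₁]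
      field_simp
      ring
    rw [Finset.sum_sub_distrib] at hz
    linarith
  · -- ¬ MEquiv
    rintro ⟨π, hbij, hFe, hQe⟩
    set c : Fin K → ℝ := fun k =>
      (if k₀ = k then (1:ℝ) else 0) - δ * (if k₁ = k then 1 else 0)
        - (if π k₀ = k then 1 else 0) with hcdef
    have hc0 : ∀ k, c k = 0 := by
      apply Fintype.linearIndependent_iff.mp hQind
      funext i
      have hrow : Q k₀ i - δ * Q k₁ i = Q (π k₀) i := by
        have := hQe k₀ i
        rw [eQ0 i] at this
        linarith
      have hsum : ∑ k, c k * Q k i = 0 := by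
        simp only [hcdef, sub_mul, mul_assoc]
        rw [Finset.sum_sub_distrib, Finset.sum_sub_distrib]
        simp only [ite_mul, one_mul, zero_mul, mul_ite, mul_zero]
        rw [Finset.sum_ite_eq, Finset.sum_ite_eq, Finset.sum_ite_eq]
        simp only [Finset.mem_univ, if_true]
        linarith
      simpa [Finset.sum_apply] using hsum
    by_cases hp : π k₀ = k₀
    · have h := hc0 k₁
      simp [hcdef, hp, hk₀₁] at h
      linarith
    · have h := hc0 k₀
      simp [hcdef, hk₁, hp] at h
  · -- anchorRows
    ext k
    simp only [anchorRows, Set.mem_setOf_eq, Set.mem_diff, Set.mem_singleton_iff]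
    constructor
    · rintro ⟨s, d, hd, hrow⟩
      have hk0 : k ≠ k₀ := by
        intro h
        have h1 : F2 s k₁ = 0 := by
          rw [hrow k₁, if_neg (fun h2 => hk₀₁ (h.symm.trans h2.symm))]
        obtain ⟨-, h2⟩ := hFnum s h1
        have h3 : F2 s k₀ = d := by rw [hrow k₀, if_pos h.symm]
        rw [eFo s k₀ hk₀₁, h2] at h3
        exact hd.ne h3
      have hFk₀0 : F s k₀ = 0 := by
        have := hrow k₀
        rw [if_neg (fun h => hk0 h.symm), eFo s k₀ hk₀₁] at this
        exact this
      refine ⟨⟨s, if k = k₁ then (1 + δ) * d else d, ?_, fun l => ?_⟩, hk0⟩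
      · split_ifs
        · positivity
        · exact hd
      · by_cases hl : l = k₁
        · rw [hl]
          have h1 : F s k₁ = (1 + δ) * F2 s k₁ := by
            rw [eF1 s, hFk₀0]
            field_simp
            ring
          rw [h1, hrow k₁]
          by_cases hkk : k₁ = k
          · rw [if_pos hkk, if_pos hkk, if_pos hkk.symm]
          · rw [if_neg hkk, if_neg hkk, mul_zero]
        · rw [← eFo s l hl, hrow l]
          by_cases hlk : l = k
          · rw [if_pos hlk, if_pos hlk, if_neg (fun h => hl (hlk.trans h))]
          · rw [if_neg hlk, if_neg hlk]
    · rintro ⟨⟨s, d, hd, hrow⟩, hk0⟩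
      have hFk₀0 : F s k₀ = 0 := by
        have := hrow k₀
        rwa [if_neg (fun h => hk0 h.symm)] at this
      refine ⟨s, if k = k₁ then d / (1 + δ) else d, ?_, fun l => ?_⟩
      · split_ifs
        · positivity
        · exact hd
      · by_cases hl : l = k₁
        · rw [hl, eF1 s, hFk₀0, mul_zero, add_zero, hrow k₁]
          by_cases hkk : k₁ = k
          · rw [if_pos hkk, if_pos hkk, if_pos hkk.symm]
          · rw [if_neg hkk, if_neg hkk, zero_div]
        · rw [eFo s l hl, hrow l]
          by_cases hlk : l = k
          · rw [if_pos hlk, if_pos hlk, if_neg (fun h => hl (hlk.trans h))]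
          · rw [if_neg hlk, if_neg hlk]
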